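/- The function g is differentiable on (0, k₂/θ²) with g′(A) = −(e^{θ ȳ(A)} − 1)² / e^{θ ȳ(A)} < 0 for every A ∈ (0, k₂/θ²); in particular g is strictly decreasing on (0, k₂/θ²). -/

import Mathlib

/-- `h_A(y) = A θ e^{θ y} − A θ e^{−θ y} − 2 k₂ y`. -/
noncomputable def hFun (θ k₂ A y : ℝ) : ℝ :=
  A * θ * Real.exp (θ * y) - A * θ * Real.exp (-(θ * y)) - 2 * k₂ * y

/-- `g(A) = −A e^{θ ȳ(A)} − A e^{−θ ȳ(A)} + k₂ ȳ(A)² + 2A`. -/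
noncomputable def gFun (θ k₂ : ℝ) (ybar : ℝ → ℝ) (A : ℝ) : ℝ :=
  -A * Real.exp (θ * ybar A) - A * Real.exp (-(θ * ybar A)) + k₂ * (ybar A) ^ 2 + 2 * A



/-- key inequality: sinh u < u cosh u for u > 0. -/
lemma sinh_aux {u : ℝ} (hu : 0 < u) :
    Real.exp u - Real.exp (-u) < u * (Real.exp u + Real.exp (-u)) := by
  set f : ℝ → ℝ := fun v => Real.exp v - Real.exp (-v) - v * (Real.exp v + Real.exp (-v)) with hf
  have hd : ∀ x : ℝ, HasDerivAt f (-(x * (Real.exp x - Real.exp (-x)))) x := by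
    intro x
    have h1 : HasDerivAt Real.exp (Real.exp x) x := Real.hasDerivAt_exp x
    have h2 : HasDerivAt (fun v : ℝ => Real.exp (-v)) (Real.exp (-x) * -1) x :=
      (hasDerivAt_id x).neg.exp
    have : HasDerivAt f (Real.exp x - Real.exp (-x) * -1 - (1 * (Real.exp x + Real.exp (-x)) +
        id x * (Real.exp x + Real.exp (-x) * -1))) x :=
      (h1.sub h2).sub ((hasDerivAt_id x).mul (h1.add h2))
    convert this using 1
    simp only [id_eq]
    ring
  have hanti : StrictAntiOn f (Set.Ici 0) := by
    apply strictAntiOn_of_deriv_neg (convex_Ici 0)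
    · exact fun x _ => (hd x).continuousAt.continuousWithinAt
    · intro x hx
      rw [interior_Ici] at hx
      rw [(hd x).deriv]
      have hx' : (0:ℝ) < x := hx
      have : Real.exp (-x) < Real.exp x := Real.exp_lt_exp.2 (by linarith)
      nlinarith
  have h := hanti Set.self_mem_Ici (Set.mem_Ici.2 hu.le) hu
  simp [hf] at h
  linarith

noncomputable def phiFun (θ k₂ y : ℝ) : ℝ :=
  2 * k₂ * y / (θ * (Real.exp (θ * y) - Real.exp (-(θ * y))))

noncomputable def phiD (θ k₂ y : ℝ) : ℝ :=
  (2 * k₂ * (θ * (Real.exp (θ * y) - Real.exp (-(θ * y)))) -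
      2 * k₂ * y * (θ * (Real.exp (θ * y) * θ - Real.exp (-(θ * y)) * -θ))) /
    (θ * (Real.exp (θ * y) - Real.exp (-(θ * y)))) ^ 2

lemma denom_pos {θ : ℝ} (hθ : 0 < θ) {y : ℝ} (hy : 0 < y) :
    0 < θ * (Real.exp (θ * y) - Real.exp (-(θ * y))) := by
  have : Real.exp (-(θ * y)) < Real.exp (θ * y) := Real.exp_lt_exp.2 (by nlinarith)
  nlinarith

lemma phi_hasDeriv {θ k₂ : ℝ} (hθ : 0 < θ) {y : ℝ} (hy : 0 < y) :
    HasDerivAt (phiFun θ k₂) (phiD θ k₂ y) y := by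
  have hθy : HasDerivAt (fun v : ℝ => θ * v) θ y := by
    simpa using (hasDerivAt_id y).const_mul θ
  have e1 : HasDerivAt (fun v : ℝ => Real.exp (θ * v)) (Real.exp (θ * y) * θ) y := hθy.exp
  have e2 : HasDerivAt (fun v : ℝ => Real.exp (-(θ * v))) (Real.exp (-(θ * y)) * -θ) y :=
    hθy.neg.exp
  have num : HasDerivAt (fun v : ℝ => 2 * k₂ * v) (2 * k₂) y := by
    simpa using (hasDerivAt_id y).const_mul (2 * k₂)
  have den : HasDerivAt (fun v : ℝ => θ * (Real.exp (θ * v) - Real.exp (-(θ * v))))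
      (θ * (Real.exp (θ * y) * θ - Real.exp (-(θ * y)) * -θ)) y := (e1.sub e2).const_mul θ
  exact num.div den (denom_pos hθ hy).ne'

lemma phiD_neg {θ k₂ : ℝ} (hθ : 0 < θ) (hk : 0 < k₂) {y : ℝ} (hy : 0 < y) :
    phiD θ k₂ y < 0 := by
  apply div_neg_of_neg_of_pos
  · have hs := sinh_aux (u := θ * y) (by positivity)
    nlinarith [mul_lt_mul_of_pos_left hs (by positivity : (0:ℝ) < 2 * k₂ * θ)]
  · exact pow_pos (denom_pos hθ hy) 2

lemma phi_anti {θ k₂ : ℝ} (hθ : 0 < θ) (hk : 0 < k₂) :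
    StrictAntiOn (phiFun θ k₂) (Set.Ioi 0) := by
  apply strictAntiOn_of_deriv_neg (convex_Ioi 0)
  · exact fun x hx => (phi_hasDeriv hθ hx).continuousAt.continuousWithinAt
  · intro x hx
    rw [interior_Ioi] at hx
    rw [(phi_hasDeriv hθ hx).deriv]
    exact phiD_neg hθ hk hx

theorem stmt_4 (θ k₂ : ℝ) (hθ : 0 < θ) (hk : 0 < k₂) (ybar : ℝ → ℝ)
    (hybar : ∀ A : ℝ, 0 < A → A < k₂ / θ ^ 2 →
      0 < ybar A ∧ hFun θ k₂ A (ybar A) = 0) :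
    (∀ A : ℝ, 0 < A → A < k₂ / θ ^ 2 →
      HasDerivAt (gFun θ k₂ ybar)
        (-(Real.exp (θ * ybar A) - 1) ^ 2 / Real.exp (θ * ybar A)) A ∧
      -(Real.exp (θ * ybar A) - 1) ^ 2 / Real.exp (θ * ybar A) < 0) ∧
    StrictAntiOn (gFun θ k₂ ybar) (Set.Ioo 0 (k₂ / θ ^ 2)) := by
  -- φ(ybar A) = A on the interval
  have hphiy : ∀ A : ℝ, 0 < A → A < k₂ / θ ^ 2 → phiFun θ k₂ (ybar A) = A := by
    intro A hA1 hA2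
    obtain ⟨hy0, heq⟩ := hybar A hA1 hA2
    unfold hFun at heq
    unfold phiFun
    rw [div_eq_iff (denom_pos hθ hy0).ne']
    linear_combination -heq
  -- continuity of ybar
  have hcont : ∀ A : ℝ, 0 < A → A < k₂ / θ ^ 2 → ContinuousAt ybar A := by
    intro A hA1 hA2
    obtain ⟨hy0, -⟩ := hybar A hA1 hA2
    rw [ContinuousAt, tendsto_order]
    constructor
    · intro b hb
      set y₀ : ℝ := max ((b + ybar A) / 2) (ybar A / 2) with hy₀
      have hy₀pos : 0 < y₀ := lt_of_lt_of_le (by linarith) (le_max_right _ _)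
      have hy₀lt : y₀ < ybar A := max_lt (by linarith) (by linarith)
      have hby₀ : b < y₀ := lt_of_lt_of_le (by linarith) (le_max_left _ _)
      have hφ : A < phiFun θ k₂ y₀ := by
        have h := phi_anti hθ hk (Set.mem_Ioi.2 hy₀pos) (Set.mem_Ioi.2 hy0) hy₀lt
        rwa [hphiy A hA1 hA2] at h
      filter_upwards [isOpen_Iio.mem_nhds hφ,
        isOpen_Ioo.mem_nhds (Set.mem_Ioo.2 ⟨hA1, hA2⟩)] with A' h1 h2
      obtain ⟨hy0', -⟩ := hybar A' h2.1 h2.2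
      by_contra hle
      push_neg at hle
      have h3 : phiFun θ k₂ y₀ < phiFun θ k₂ (ybar A') :=
        phi_anti hθ hk (Set.mem_Ioi.2 hy0') (Set.mem_Ioi.2 hy₀pos)
          (lt_of_le_of_lt hle hby₀)
      rw [hphiy A' h2.1 h2.2] at h3
      exact absurd h1 (not_lt.2 h3.le)
    · intro b hb
      set y₁ : ℝ := (ybar A + b) / 2 with hy₁
      have hy₁pos : 0 < y₁ := by simp only [hy₁]; linarith
      have hy₁gt : ybar A < y₁ := by simp only [hy₁]; linarith
      have hy₁lt : y₁ < b := by simp only [hy₁]; linarith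
      have hφ : phiFun θ k₂ y₁ < A := by
        have h := phi_anti hθ hk (Set.mem_Ioi.2 hy0) (Set.mem_Ioi.2 hy₁pos) hy₁gt
        rwa [hphiy A hA1 hA2] at h
      filter_upwards [isOpen_Ioi.mem_nhds hφ,
        isOpen_Ioo.mem_nhds (Set.mem_Ioo.2 ⟨hA1, hA2⟩)] with A' h1 h2
      obtain ⟨hy0', -⟩ := hybar A' h2.1 h2.2
      by_contra hle
      push_neg at hle
      have h3 : phiFun θ k₂ (ybar A') < phiFun θ k₂ y₁ :=
        phi_anti hθ hk (Set.mem_Ioi.2 hy₁pos) (Set.mem_Ioi.2 hy0')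
          (lt_of_lt_of_le hy₁lt hle)
      rw [hphiy A' h2.1 h2.2] at h3
      exact absurd h1 (not_lt.2 h3.le)
  -- differentiability of ybar
  have hyderiv : ∀ A : ℝ, 0 < A → A < k₂ / θ ^ 2 →
      HasDerivAt ybar (phiD θ k₂ (ybar A))⁻¹ A := by
    intro A hA1 hA2
    obtain ⟨hy0, -⟩ := hybar A hA1 hA2
    apply HasDerivAt.of_local_left_inverse (hcont A hA1 hA2) (phi_hasDeriv hθ hy0)
      (phiD_neg hθ hk hy0).ne
    filter_upwards [isOpen_Ioo.mem_nhds (Set.mem_Ioo.2 ⟨hA1, hA2⟩)] with A' h2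
    exact hphiy A' h2.1 h2.2
  -- derivative of gFun
  have hmain : ∀ A : ℝ, 0 < A → A < k₂ / θ ^ 2 →
      HasDerivAt (gFun θ k₂ ybar)
        (-(Real.exp (θ * ybar A) - 1) ^ 2 / Real.exp (θ * ybar A)) A := by
    intro A hA1 hA2
    obtain ⟨hy0, heq⟩ := hybar A hA1 hA2
    unfold hFun at heq
    set y' : ℝ := (phiD θ k₂ (ybar A))⁻¹ with hy'
    have hy := hyderiv A hA1 hA2
    have hθy : HasDerivAt (fun A => θ * ybar A) (θ * y') A := hy.const_mul θ
    have e1 : HasDerivAt (fun A => Real.exp (θ * ybar A))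
        (Real.exp (θ * ybar A) * (θ * y')) A := hθy.exp
    have e2 : HasDerivAt (fun A => Real.exp (-(θ * ybar A)))
        (Real.exp (-(θ * ybar A)) * -(θ * y')) A := hθy.neg.exp
    have f1 := (hasDerivAt_id A).neg.mul e1
    have f2 := (hasDerivAt_id A).mul e2
    have f3 := (hy.pow 2).const_mul k₂
    have f4 : HasDerivAt (fun A : ℝ => 2 * A) 2 A := by
      simpa using (hasDerivAt_id A).const_mul 2
    have total := ((f1.sub f2).add f3).add f4
    have hfun_eq : (fun A : ℝ => -id A * Real.exp (θ * ybar A) -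
        id A * Real.exp (-(θ * ybar A)) + k₂ * ybar A ^ 2 + 2 * A) = gFun θ k₂ ybar := by
      funext B; simp [gFun]
    have total : HasDerivAt (gFun θ k₂ ybar)
        (-1 * Real.exp (θ * ybar A) + (-id) A * (Real.exp (θ * ybar A) * (θ * y')) -
          (1 * Real.exp (-(θ * ybar A)) + id A * (Real.exp (-(θ * ybar A)) * -(θ * y'))) +
          k₂ * (((2:ℕ):ℝ) * ybar A ^ (2 - 1) * (phiD θ k₂ (ybar A))⁻¹) + 2) A :=
      total.congr_of_eventuallyEq (f₁ := gFun θ k₂ ybar)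
      (Filter.Eventually.of_forall fun B => rfl)
    convert total using 1
    have hinv : Real.exp (θ * ybar A) * Real.exp (-(θ * ybar A)) = 1 := by
      rw [← Real.exp_add]; simp
    rw [div_eq_iff (Real.exp_pos _).ne']
    simp only [id_eq, Pi.neg_apply]
    linear_combination hinv + y' * Real.exp (θ * ybar A) * heq
  constructor
  · intro A hA1 hA2
    refine ⟨hmain A hA1 hA2, ?_⟩
    obtain ⟨hy0, -⟩ := hybar A hA1 hA2
    have h1 : (1:ℝ) < Real.exp (θ * ybar A) := by
      rw [show (1:ℝ) = Real.exp 0 by simp]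
      exact Real.exp_lt_exp.2 (by positivity)
    apply div_neg_of_neg_of_pos _ (Real.exp_pos _)
    have : 0 < (Real.exp (θ * ybar A) - 1) ^ 2 := pow_pos (by linarith) 2
    linarith
  · apply strictAntiOn_of_deriv_neg (convex_Ioo 0 (k₂ / θ ^ 2))
    · exact fun x hx => (hmain x hx.1 hx.2).continuousAt.continuousWithinAt
    · intro x hx
      rw [interior_Ioo] at hx
      rw [(hmain x hx.1 hx.2).deriv]
      obtain ⟨hy0, -⟩ := hybar x hx.1 hx.2
      have h1 : (1:ℝ) < Real.exp (θ * ybar x) := by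
        rw [show (1:ℝ) = Real.exp 0 by simp]
        exact Real.exp_lt_exp.2 (by positivity)
      apply div_neg_of_neg_of_pos _ (Real.exp_pos _)
      have : 0 < (Real.exp (θ * ybar x) - 1) ^ 2 := pow_pos (by linarith) 2
      linarith
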